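/- arXiv:2503.18184 — 5 statements merged into one kernel-verified Lean document; each statement's English description precedes it below -/
import Mathlib

section
/- For a finite quiver Q with no isolated vertices considered, the number of isolated vertices in the Kronecker square Q̂ equals 2·(number of sinks of Q)·(number of sources of Q), provided no vertex of Q is both a sink and a source. -/
structure Quiv where
  V : Type
  E : Type
  s : E → V
  r : E → V

namespace Quiv

def kron (Q Q' : Quiv) : Quiv :=
  ⟨Q.V × Q'.V, Q.E × Q'.E, fun e => (Q.s e.1, Q'.s e.2), fun e => (Q.r e.1, Q'.r e.2)⟩

def IsSink (Q : Quiv) (v : Q.V) : Prop := ∀ e, Q.s e ≠ v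

def IsSource (Q : Quiv) (v : Q.V) : Prop := ∀ e, Q.r e ≠ v

def Isolated (Q : Quiv) (v : Q.V) : Prop := Q.IsSink v ∧ Q.IsSource v

inductive Reach (Q : Quiv) : Q.V → Q.V → Prop
  | refl (v : Q.V) : Reach Q v v
  | step (e : Q.E) {v : Q.V} : Reach Q (Q.r e) v → Reach Q (Q.s e) v

inductive PathN (Q : Quiv) : ℕ → Q.V → Q.V → Prop
  | nil (v : Q.V) : PathN Q 0 v v
  | cons (e : Q.E) {n : ℕ} {v : Q.V} : PathN Q n (Q.r e) v → PathN Q (n + 1) (Q.s e) v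

def IsClosedPath (Q : Quiv) (l : List Q.E) : Prop :=
  l ≠ [] ∧ l.Chain' (fun e f => Q.r e = Q.s f) ∧
    l.getLast?.map Q.r = l.head?.map Q.s

def IsCycle (Q : Quiv) (l : List Q.E) : Prop :=
  Q.IsClosedPath l ∧ (l.map Q.s).Nodup

end Quiv

/-- For a finite quiver in which no vertex is simultaneously a sink and a source, the
number of isolated vertices of the Kronecker square is twice the product of the number
of sinks and the number of sources. -/
theorem kron_card_isolated (Q : Quiv) [Fintype Q.V] [Fintype Q.E]
    (h : ∀ v : Q.V, ¬ (Q.IsSink v ∧ Q.IsSource v)) :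
    Set.ncard {w : (Q.kron Q).V | (Q.kron Q).Isolated w} =
      2 * (Set.ncard {v : Q.V | Q.IsSink v} * Set.ncard {v : Q.V | Q.IsSource v}) := by
  set A : Set Q.V := {v | Q.IsSink v}
  set B : Set Q.V := {v | Q.IsSource v}
  have hAB : Disjoint A B := by
    rw [Set.disjoint_left]
    intro v hv hv'
    exact h v ⟨hv, hv'⟩
  have hset : {w : (Q.kron Q).V | (Q.kron Q).Isolated w} = (A ×ˢ B) ∪ (B ×ˢ A) := by
    ext ⟨u, v⟩
    constructor
    · rintro ⟨hsink, hsource⟩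
      have h1 : Q.IsSink u ∨ Q.IsSink v := by
        by_contra hc
        push_neg at hc
        obtain ⟨hc1, hc2⟩ := hc
        simp only [Quiv.IsSink, not_forall, not_not] at hc1 hc2
        obtain ⟨e, he⟩ := hc1
        obtain ⟨f, hf⟩ := hc2
        exact hsink (e, f) (by simp [Quiv.kron, he, hf])
      have h2 : Q.IsSource u ∨ Q.IsSource v := by
        by_contra hc
        push_neg at hc
        obtain ⟨hc1, hc2⟩ := hc
        simp only [Quiv.IsSource, not_forall, not_not] at hc1 hc2
        obtain ⟨e, he⟩ := hc1
        obtain ⟨f, hf⟩ := hc2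
        exact hsource (e, f) (by simp [Quiv.kron, he, hf])
      rcases h1 with h1 | h1 <;> rcases h2 with h2 | h2
      · exact absurd ⟨h1, h2⟩ (h u)
      · exact Or.inl ⟨h1, h2⟩
      · exact Or.inr ⟨h2, h1⟩
      · exact absurd ⟨h1, h2⟩ (h v)
    · rintro (⟨hu, hv⟩ | ⟨hu, hv⟩)
      · refine ⟨fun e he => ?_, fun e he => ?_⟩ <;>
          simp only [Quiv.kron, Prod.mk.injEq] at he
        · exact hu e.1 he.1
        · exact hv e.2 he.2
      · refine ⟨fun e he => ?_, fun e he => ?_⟩ <;>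
          simp only [Quiv.kron, Prod.mk.injEq] at he
        · exact hv e.2 he.2
        · exact hu e.1 he.1
  have hdisj : Disjoint (A ×ˢ B) (B ×ˢ A) := by
    rw [Set.disjoint_left]
    rintro ⟨u, v⟩ ⟨hu, hv⟩ ⟨hu', hv'⟩
    exact h u ⟨hu, hu'⟩
  have hprod : ∀ s t : Set Q.V, (s ×ˢ t).ncard = s.ncard * t.ncard := by
    intro s t
    rw [← Nat.card_coe_set_eq, ← Nat.card_coe_set_eq, ← Nat.card_coe_set_eq,
      Nat.card_congr (Equiv.Set.prod s t), Nat.card_prod]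
  rw [hset]
  change (A ×ˢ B ∪ B ×ˢ A : Set (Q.V × Q.V)).ncard = _
  rw [Set.ncard_union_eq hdisj (Set.toFinite _) (Set.toFinite _), hprod, hprod,
    Nat.mul_comm B.ncard A.ncard, two_mul]
end

section
/- Let Q be a row-finite quiver and let H be the hereditary saturated closure of the set of line points of Q. If u is a line point of the quiver Q∖H, then there exists an arrow f with s(f) = u, r(f) ∉ H, and r(f) ≠ u. -/
namespace Quiv

def IsBifurcation (Q : Quiv) (v : Q.V) : Prop :=
  ∃ e f : Q.E, e ≠ f ∧ Q.s e = v ∧ Q.s f = v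

/-- A line point: no vertex reachable from `u` is a bifurcation or lies on a closed path. -/
def IsLinePoint (Q : Quiv) (u : Q.V) : Prop :=
  ∀ w : Q.V, Q.Reach u w →
    ¬ Q.IsBifurcation w ∧ ¬ ∃ e : Q.E, Q.s e = w ∧ Q.Reach (Q.r e) w

def Hereditary (Q : Quiv) (H : Set Q.V) : Prop := ∀ e : Q.E, Q.s e ∈ H → Q.r e ∈ H

def IsRegular (Q : Quiv) (v : Q.V) : Prop :=
  (∃ e : Q.E, Q.s e = v) ∧ {e : Q.E | Q.s e = v}.Finite

def Saturated (Q : Quiv) (H : Set Q.V) : Prop :=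
  ∀ v : Q.V, Q.IsRegular v → (∀ e : Q.E, Q.s e = v → Q.r e ∈ H) → v ∈ H

/-- The hereditary saturated closure of a set of vertices. -/
def hsClosure (Q : Quiv) (X : Set Q.V) : Set Q.V :=
  ⋂₀ {H : Set Q.V | X ⊆ H ∧ Q.Hereditary H ∧ Q.Saturated H}

/-- The quiver obtained by removing a set of vertices and all incident arrows. -/
def minus (Q : Quiv) (H : Set Q.V) : Quiv :=
  ⟨{v : Q.V // v ∉ H}, {e : Q.E // Q.s e ∉ H ∧ Q.r e ∉ H},
    fun e => ⟨Q.s e.1, e.2.1⟩, fun e => ⟨Q.r e.1, e.2.2⟩⟩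

def RowFinite (Q : Quiv) : Prop := ∀ v : Q.V, {e : Q.E | Q.s e = v}.Finite

end Quiv


/-- If `u` is a line point of `Q ∖ H`, where `H` is the hereditary saturated closure of
the line points of a row-finite quiver `Q`, then there is an arrow `f` with source `u`,
range outside `H`, and range different from `u`. -/
theorem linePoint_of_minus_has_exit_arrow (Q : Quiv) (hrow : Q.RowFinite)
    (H : Set Q.V) (hH : H = Q.hsClosure {v : Q.V | Q.IsLinePoint v})
    (u : Q.V) (hu : u ∉ H)
    (hl : (Q.minus H).IsLinePoint ⟨u, hu⟩) :
    ∃ f : Q.E, Q.s f = u ∧ Q.r f ∉ H ∧ Q.r f ≠ u := by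
  by_contra hcon
  push_neg at hcon
  -- no self-loop at u
  have hnoloop : ∀ f : Q.E, Q.s f = u → Q.r f ≠ u := by
    intro f hs hr
    have h2 := (hl ⟨u, hu⟩ (Quiv.Reach.refl _)).2
    apply h2
    refine ⟨⟨f, by rw [hs]; exact hu, by rw [hr]; exact hu⟩, Subtype.ext hs, ?_⟩
    have hre : (Q.minus H).r ⟨f, by rw [hs]; exact hu, by rw [hr]; exact hu⟩
        = ⟨u, hu⟩ := Subtype.ext hr
    rw [hre]
    exact Quiv.Reach.refl _
  have hall : ∀ f : Q.E, Q.s f = u → Q.r f ∈ H := by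
    intro f hs
    by_contra hr
    exact hnoloop f hs (hcon f hs hr)
  by_cases hex : ∃ f : Q.E, Q.s f = u
  · -- u is regular, all ranges in H, H saturated ⇒ u ∈ H
    have hsat : Q.Saturated H := by
      subst hH
      intro v hreg hr K hK
      exact hK.2.2 v hreg (fun e he => hr e he K hK)
    exact hu (hsat u ⟨hex, hrow u⟩ hall)
  · -- u is a sink, hence a line point of Q, hence in H
    push_neg at hex
    have hlp : Q.IsLinePoint u := by
      intro w hw
      cases hw with
      | refl =>
        constructor
        · rintro ⟨e, f, -, he, -⟩
          exact hex e he
        · rintro ⟨e, he, -⟩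
          exact hex e he
      | step e h => exact absurd rfl (hex e)
    apply hu
    rw [hH]
    intro K hK
    exact hK.1 hlp
end

section
/- Let Q be a row-finite quiver with hereditary saturated closure H of its set of line points. If u₁,…,u_k are distinct vertices not in H such that u₁ is a line point of Q∖H and for each i there is an arrow from uᵢ to u_{i+1}, then there exists a vertex u_{k+1} ∉ {u₁,…,u_k} ∪ H with an arrow from u_k to u_{k+1}. Consequently, if Q₀ is finite, then Q∖H has no line points. -/
section Aux

theorem sink_linePoint (Q : Quiv) (v : Q.V) (hs : ∀ e : Q.E, Q.s e ≠ v) :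
    Q.IsLinePoint v := by
  intro w hw
  cases hw with
  | refl =>
    constructor
    · rintro ⟨e, f, _, he, _⟩; exact hs e he
    · rintro ⟨e, he, _⟩; exact hs e he
  | step e h => exact absurd rfl (hs e)

theorem hsClosure_subset (Q : Quiv) (X : Set Q.V) : X ⊆ Q.hsClosure X :=
  fun _ hx => Set.mem_sInter.2 fun _ hK => hK.1 hx

theorem hsClosure_saturated (Q : Quiv) (X : Set Q.V) : Q.Saturated (Q.hsClosure X) :=
  fun v hreg hall => Set.mem_sInter.2 fun K hK =>
    hK.2.2 v hreg fun e he => Set.mem_sInter.1 (hall e he) K hK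

theorem chain_reach (Q : Quiv) (H : Set Q.V) {k : ℕ} (u : Fin k → Q.V)
    (hu : ∀ i, u i ∉ H)
    (hchain : ∀ i j : Fin k, (j : ℕ) = (i : ℕ) + 1 → ∃ e : Q.E, Q.s e = u i ∧ Q.r e = u j) :
    ∀ (n : ℕ) (i j : Fin k), (j : ℕ) = (i : ℕ) + n →
      (Q.minus H).Reach ⟨u i, hu i⟩ ⟨u j, hu j⟩ := by
  intro n
  induction n with
  | zero =>
    intro i j hij
    have : i = j := Fin.ext (by omega)
    subst this
    exact Quiv.Reach.refl _
  | succ n ih =>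
    intro i j hij
    have hi1 : (i : ℕ) + 1 < k := by omega
    obtain ⟨e, hs, hr⟩ := hchain i ⟨(i : ℕ) + 1, hi1⟩ rfl
    have he1 : Q.s e ∉ H := hs ▸ hu i
    have he2 : Q.r e ∉ H := hr ▸ hu ⟨(i : ℕ) + 1, hi1⟩
    have h1 : (Q.minus H).s ⟨e, he1, he2⟩ = ⟨u i, hu i⟩ := Subtype.ext hs
    have h2 : (Q.minus H).r ⟨e, he1, he2⟩ = ⟨u ⟨(i : ℕ) + 1, hi1⟩, hu _⟩ := Subtype.ext hr
    have hrest : (Q.minus H).Reach ((Q.minus H).r ⟨e, he1, he2⟩) ⟨u j, hu j⟩ := by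
      rw [h2]; exact ih ⟨(i : ℕ) + 1, hi1⟩ j (show (j : ℕ) = ((i : ℕ) + 1) + n by omega)
    have := Quiv.Reach.step (Q := Q.minus H) ⟨e, he1, he2⟩ hrest
    rwa [h1] at this

end Aux

/-- Extension of chains of vertices outside the hereditary saturated closure of line
points, and consequently: if the vertex set is finite, `Q ∖ H` has no line points. -/
theorem linePoint_chain_extends_and_finite_case (Q : Quiv) (hrow : Q.RowFinite)
    (H : Set Q.V) (hH : H = Q.hsClosure {v : Q.V | Q.IsLinePoint v}) :
    (∀ (k : ℕ) (hk : 0 < k) (u : Fin k → Q.V),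
      Function.Injective u →
      ∀ (hu : ∀ i, u i ∉ H),
      (Q.minus H).IsLinePoint ⟨u ⟨0, hk⟩, hu ⟨0, hk⟩⟩ →
      (∀ i j : Fin k, (j : ℕ) = (i : ℕ) + 1 → ∃ e : Q.E, Q.s e = u i ∧ Q.r e = u j) →
      ∃ w : Q.V, w ∉ H ∧ (∀ i, w ≠ u i) ∧
        ∃ e : Q.E, Q.s e = u ⟨k - 1, by omega⟩ ∧ Q.r e = w) ∧
    (Finite Q.V → ∀ w : (Q.minus H).V, ¬ (Q.minus H).IsLinePoint w) := by
  subst hH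
  set H := Q.hsClosure {v : Q.V | Q.IsLinePoint v} with hHdef
  have part1 : ∀ (k : ℕ) (hk : 0 < k) (u : Fin k → Q.V),
      Function.Injective u →
      ∀ (hu : ∀ i, u i ∉ H),
      (Q.minus H).IsLinePoint ⟨u ⟨0, hk⟩, hu ⟨0, hk⟩⟩ →
      (∀ i j : Fin k, (j : ℕ) = (i : ℕ) + 1 → ∃ e : Q.E, Q.s e = u i ∧ Q.r e = u j) →
      ∃ w : Q.V, w ∉ H ∧ (∀ i, w ≠ u i) ∧
        ∃ e : Q.E, Q.s e = u ⟨k - 1, by omega⟩ ∧ Q.r e = w := by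
    intro k hk u hinj hu hlp hchain
    set ik : Fin k := ⟨k - 1, by omega⟩ with hik
    -- u ik emits an edge
    have hsrc : ∃ e : Q.E, Q.s e = u ik := by
      by_contra hne
      push_neg at hne
      exact hu ik (hsClosure_subset Q _ (sink_linePoint Q (u ik) hne))
    -- not all ranges lie in H
    have hnall : ¬ ∀ e : Q.E, Q.s e = u ik → Q.r e ∈ H := by
      intro hall
      exact hu ik (hsClosure_saturated Q _ (u ik) ⟨hsrc, hrow (u ik)⟩ hall)
    push_neg at hnall
    obtain ⟨e, hse, hre⟩ := hnall
    refine ⟨Q.r e, hre, ?_, e, hse, rfl⟩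
    intro j hj
    -- otherwise u ik lies on a closed path in Q ∖ H
    have he1 : Q.s e ∉ H := hse ▸ hu ik
    have hreach0 : (Q.minus H).Reach ⟨u ⟨0, hk⟩, hu _⟩ ⟨u ik, hu ik⟩ :=
      chain_reach Q H u hu hchain (k - 1) ⟨0, hk⟩ ik (show k - 1 = 0 + (k - 1) by omega)
    have hcyc : ∃ f : (Q.minus H).E, (Q.minus H).s f = ⟨u ik, hu ik⟩ ∧
        (Q.minus H).Reach ((Q.minus H).r f) ⟨u ik, hu ik⟩ := by
      refine ⟨⟨e, he1, hre⟩, Subtype.ext hse, ?_⟩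
      have h2 : (Q.minus H).r ⟨e, he1, hre⟩ = ⟨u j, hu j⟩ := Subtype.ext hj
      rw [h2]
      exact chain_reach Q H u hu hchain ((k - 1) - (j : ℕ)) j ik
        (show k - 1 = (j : ℕ) + ((k - 1) - (j : ℕ)) by have := j.isLt; omega)
    exact (hlp ⟨u ik, hu ik⟩ hreach0).2 hcyc
  refine ⟨part1, ?_⟩
  intro hfin w hlp
  obtain ⟨v, hv⟩ := w
  have key : ∀ n : ℕ, ∃ u : Fin (n + 1) → Q.V, Function.Injective u ∧
      ∃ hu : ∀ i, u i ∉ H, u ⟨0, Nat.succ_pos n⟩ = v ∧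
      (∀ i j : Fin (n + 1), (j : ℕ) = (i : ℕ) + 1 →
        ∃ e : Q.E, Q.s e = u i ∧ Q.r e = u j) := by
    intro n
    induction n with
    | zero =>
      refine ⟨fun _ => v, fun a b _ => Fin.ext (by have := a.isLt; have := b.isLt; omega), fun _ => hv, rfl, ?_⟩
      intro i j hij
      exact absurd hij (by omega)
    | succ n ih =>
      obtain ⟨u, hinj, hu, h0, hch⟩ := ih
      have hlp' : (Q.minus H).IsLinePoint ⟨u ⟨0, Nat.succ_pos n⟩, hu _⟩ := by
        have heq : (⟨u ⟨0, Nat.succ_pos n⟩, hu _⟩ : (Q.minus H).V) = ⟨v, hv⟩ :=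
          Subtype.ext h0
        rw [heq]; exact hlp
      obtain ⟨w, hwH, hwne, e, hse, hre⟩ :=
        part1 (n + 1) (Nat.succ_pos n) u hinj hu hlp' hch
      refine ⟨fun i => if h : (i : ℕ) < n + 1 then u ⟨(i : ℕ), h⟩ else w, ?_, ?_, ?_, ?_⟩
      · intro a b hab
        by_cases ha : (a : ℕ) < n + 1 <;> by_cases hb : (b : ℕ) < n + 1 <;>
          simp only [dif_pos, dif_neg, ha, hb, dite_true, dite_false] at hab
        · exact Fin.ext (by simpa using congrArg Fin.val (hinj hab))
        · exact absurd hab.symm (hwne ⟨(a : ℕ), ha⟩)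
        · exact absurd hab (hwne ⟨(b : ℕ), hb⟩)
        · exact Fin.ext (by omega)
      · refine fun i => ?_
        show (if h : (i : ℕ) < n + 1 then u ⟨(i : ℕ), h⟩ else w) ∉ H
        by_cases h : (i : ℕ) < n + 1
        · rw [dif_pos h]; exact hu _
        · rw [dif_neg h]; exact hwH
      · show (if h : (0 : ℕ) < n + 1 then u ⟨0, h⟩ else w) = v
        rw [dif_pos (Nat.succ_pos n)]; exact h0
      · intro i j hij
        show ∃ e : Q.E,
          Q.s e = (if h : (i : ℕ) < n + 1 then u ⟨(i : ℕ), h⟩ else w) ∧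
          Q.r e = (if h : (j : ℕ) < n + 1 then u ⟨(j : ℕ), h⟩ else w)
        by_cases hj : (j : ℕ) < n + 1
        · have hi : (i : ℕ) < n + 1 := by omega
          rw [dif_pos hj, dif_pos hi]
          exact hch ⟨(i : ℕ), hi⟩ ⟨(j : ℕ), hj⟩ hij
        · have hi : (i : ℕ) < n + 1 := by omega
          rw [dif_neg hj, dif_pos hi]
          refine ⟨e, ?_, hre⟩
          rw [hse]
          congr 1
          exact Fin.ext (by simp; have := i.isLt; have := j.isLt; omega)
  haveI := Fintype.ofFinite Q.V
  obtain ⟨u, hinj, -⟩ := key (Fintype.card Q.V)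
  have := Fintype.card_le_of_injective u hinj
  simp [Fintype.card_fin] at this
end

section
/- In a quiver Q, any two distinct cycles have no common vertex if and only if any two distinct cycles in the Kronecker square Q̂ have no common vertex. -/
namespace Quiv

/-- Two cycles are the same cyclic sequence of arrows when one is a rotation of the other. -/
def RotEquiv {Q : Quiv} (c c' : List Q.E) : Prop := ∃ n : ℕ, c' = c.rotate n

/-- No two distinct cycles share a vertex. -/
def NoCommonVertexCycles (Q : Quiv) : Prop :=
  ∀ c c' : List Q.E, Q.IsCycle c → Q.IsCycle c' → ¬ RotEquiv c c' →
    ∀ v : Q.V, v ∈ c.map Q.s → v ∉ c'.map Q.s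

/-- There is a chain of `k` pairwise distinct cycles `c₁ ⇒ ⋯ ⇒ c_k`, where `cᵢ ⇒ c_{i+1}`
means there is a path from a vertex of `cᵢ` to a vertex of `c_{i+1}`. -/
def HasCycleChain (Q : Quiv) (k : ℕ) : Prop :=
  ∃ c : Fin k → List Q.E,
    (∀ i, Q.IsCycle (c i)) ∧
    (∀ i j, i ≠ j → ¬ RotEquiv (c i) (c j)) ∧
    ∀ i j : Fin k, (j : ℕ) = (i : ℕ) + 1 →
      ∃ v ∈ (c i).map Q.s, ∃ w ∈ (c j).map Q.s, Q.Reach v w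

end Quiv

/-! ### Auxiliary lemmas -/

theorem getElem_eq_of_eq {α : Type _} {l : List α} {i j : ℕ} (h : i = j) {hi : i < l.length} :
    l[i] = l[j]'(h ▸ hi) := by subst h; rfl

namespace Quiv

variable {Q : Quiv}

lemma isClosedPath_iff_getElem {l : List Q.E} :
    Q.IsClosedPath l ↔ 0 < l.length ∧
      (∀ i (h : i + 1 < l.length), Q.r (l[i]'(by omega)) = Q.s l[i + 1]) ∧
      ∀ (h : 0 < l.length), Q.r (l[l.length - 1]'(by omega)) = Q.s l[0] := by
  constructor
  · rintro ⟨hne, hch, hcl⟩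
    have h0 : 0 < l.length := List.length_pos_iff.mpr hne
    refine ⟨h0, ?_, ?_⟩
    · intro i h
      have := List.isChain_iff_getElem.mp hch i (by omega)
      simpa using this
    · intro h
      rw [List.getLast?_eq_getElem?, List.head?_eq_getElem?,
        List.getElem?_eq_getElem (by omega), List.getElem?_eq_getElem h] at hcl
      simpa using hcl
  · rintro ⟨h0, hch, hcl⟩
    refine ⟨List.length_pos_iff.mp h0, List.isChain_iff_getElem.mpr ?_, ?_⟩
    · intro i h
      have := hch i (by omega)
      simpa using this
    · rw [List.getLast?_eq_getElem?, List.head?_eq_getElem?,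
        List.getElem?_eq_getElem (by omega), List.getElem?_eq_getElem h0]
      simpa using hcl h0

lemma IsClosedPath.pos {l : List Q.E} (h : Q.IsClosedPath l) : 0 < l.length :=
  (isClosedPath_iff_getElem.mp h).1

lemma IsClosedPath.chain_gE {l : List Q.E} (h : Q.IsClosedPath l) {i : ℕ}
    (hi : i + 1 < l.length) : Q.r (l[i]'(by omega)) = Q.s l[i + 1] :=
  (isClosedPath_iff_getElem.mp h).2.1 i hi

lemma IsClosedPath.closed_gE {l : List Q.E} (h : Q.IsClosedPath l) :
    Q.r (l[l.length - 1]'(by have := h.pos; omega)) = Q.s (l[0]'h.pos) :=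
  (isClosedPath_iff_getElem.mp h).2.2 h.pos

lemma IsClosedPath.mod_rel {l : List Q.E} (h : Q.IsClosedPath l) (m : ℕ) :
    Q.r (l[m % l.length]'(Nat.mod_lt _ h.pos)) =
      Q.s (l[(m + 1) % l.length]'(Nat.mod_lt _ h.pos)) := by
  have h0 := h.pos
  have h1 : m % l.length < l.length := Nat.mod_lt _ h0
  have hdm := Nat.div_add_mod m l.length
  rcases Nat.lt_or_ge (m % l.length + 1) l.length with hlt | hge
  · have e1 : (m + 1) % l.length = m % l.length + 1 := by
      rw [show m + 1 = l.length * (m / l.length) + (m % l.length + 1) from by omega,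
        Nat.mul_add_mod]
      exact Nat.mod_eq_of_lt hlt
    rw [getElem_eq_of_eq e1]
    exact h.chain_gE (by omega)
  · have e0 : m % l.length = l.length - 1 := by omega
    have e1 : (m + 1) % l.length = 0 := by
      rw [show m + 1 = l.length * (m / l.length + 1) from by rw [Nat.mul_add, Nat.mul_one]; omega]
      exact Nat.mul_mod_right _ _
    rw [getElem_eq_of_eq e0, getElem_eq_of_eq e1]
    exact h.closed_gE

lemma IsClosedPath.rotate {l : List Q.E} (h : Q.IsClosedPath l) (n : ℕ) :
    Q.IsClosedPath (l.rotate n) := by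
  have h0 := h.pos
  rw [isClosedPath_iff_getElem]
  refine ⟨by simpa using h0, ?_, ?_⟩
  · intro i hi
    rw [List.getElem_rotate, List.getElem_rotate]
    rw [getElem_eq_of_eq (show (i + 1 + n) % l.length = (i + n + 1) % l.length from by
      rw [Nat.add_right_comm])]
    exact h.mod_rel (i + n)
  · intro hr
    rw [List.getElem_rotate, List.getElem_rotate]
    rw [getElem_eq_of_eq (show ((l.rotate n).length - 1 + n) % l.length
        = (l.length - 1 + n) % l.length from by rw [List.length_rotate])]
    rw [getElem_eq_of_eq (show (0 + n) % l.length = (l.length - 1 + n + 1) % l.length from by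
      rw [Nat.zero_add, show l.length - 1 + n + 1 = l.length + n from by omega,
        Nat.add_mod_left])]
    exact h.mod_rel (l.length - 1 + n)

lemma IsCycle.rotate {l : List Q.E} (h : Q.IsCycle l) (n : ℕ) : Q.IsCycle (l.rotate n) :=
  ⟨h.1.rotate n, by
    rw [List.map_rotate]
    exact (((l.map Q.s).rotate_perm n).symm).nodup h.2⟩

lemma shrink {l : List Q.E} (h : Q.IsClosedPath l) (hd : ¬ (l.map Q.s).Nodup) :
    ∃ m : List Q.E, Q.IsClosedPath m ∧ m.length < l.length ∧ m.head? = l.head? := by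
  have h0 := h.pos
  rw [List.nodup_iff_getElem?_ne_getElem?] at hd
  push_neg at hd
  obtain ⟨i, j, hij, hj, hsij⟩ := hd
  rw [List.length_map] at hj
  rw [List.getElem?_eq_getElem (by rw [List.length_map]; omega),
      List.getElem?_eq_getElem (by rw [List.length_map]; exact hj)] at hsij
  simp only [List.getElem_map, Option.some.injEq] at hsij
  rcases Nat.eq_zero_or_pos i with hi0 | hip
  · subst hi0
    have hlt : (l.take j).length = j := by rw [List.length_take]; omega
    refine ⟨l.take j, ?_, by rw [hlt]; omega, ?_⟩
    · rw [isClosedPath_iff_getElem]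
      refine ⟨by rw [hlt]; omega, ?_, ?_⟩
      · intro k hk
        rw [hlt] at hk
        rw [List.getElem_take, List.getElem_take]
        exact h.chain_gE (by omega)
      · intro hp
        rw [List.getElem_take, List.getElem_take]
        rw [getElem_eq_of_eq (show (l.take j).length - 1 = j - 1 from by rw [hlt])]
        have hc := h.chain_gE (i := j - 1) (by omega)
        rw [getElem_eq_of_eq (show j - 1 + 1 = j from by omega)] at hc
        rw [hc]
        exact hsij.symm
    · rw [List.head?_eq_getElem?, List.head?_eq_getElem?,
        List.getElem?_eq_getElem (by rw [hlt]; omega), List.getElem?_eq_getElem h0,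
        List.getElem_take]
  · have hli : (l.take i).length = i := by rw [List.length_take]; omega
    have hlm : (l.take i ++ l.drop j).length = i + (l.length - j) := by
      rw [List.length_append, hli, List.length_drop]
    refine ⟨l.take i ++ l.drop j, ?_, by rw [hlm]; omega, ?_⟩
    · rw [isClosedPath_iff_getElem]
      refine ⟨by rw [hlm]; omega, ?_, ?_⟩
      · intro k hk
        rw [hlm] at hk
        rcases Nat.lt_trichotomy (k + 1) i with h1 | h1 | h1
        · rw [List.getElem_append_left (by rw [hli]; omega),
            List.getElem_append_left (by rw [hli]; omega),
            List.getElem_take, List.getElem_take]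
          exact h.chain_gE (by omega)
        · rw [List.getElem_append_left (by rw [hli]; omega),
            List.getElem_append_right (by rw [hli]; omega),
            List.getElem_take, List.getElem_drop]
          have e2 : j + (k + 1 - (l.take i).length) = j := by rw [hli]; omega
          rw [getElem_eq_of_eq e2]
          have hc : Q.r (l[k]'(by omega)) = Q.s (l[i]'(by omega)) := by
            have := h.chain_gE (i := k) (by omega)
            rwa [getElem_eq_of_eq h1] at this
          exact hc.trans hsij
        · rw [List.getElem_append_right (by rw [hli]; omega),
            List.getElem_append_right (by rw [hli]; omega),
            List.getElem_drop, List.getElem_drop]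
          have e3 : j + (k - (l.take i).length) + 1 = j + (k + 1 - (l.take i).length) := by
            rw [hli]; omega
          have := h.chain_gE (i := j + (k - (l.take i).length)) (by rw [hli]; omega)
          rwa [getElem_eq_of_eq e3] at this
      · intro hp
        rw [List.getElem_append_right (by rw [hli, hlm]; omega),
          List.getElem_drop,
          List.getElem_append_left (by rw [hli]; omega), List.getElem_take]
        have e4 : j + ((l.take i ++ l.drop j).length - 1 - (l.take i).length) = l.length - 1 := by
          rw [hli, hlm]; omega
        rw [getElem_eq_of_eq e4]
        exact h.closed_gE
    · rw [List.head?_eq_getElem?, List.head?_eq_getElem?,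
        List.getElem?_eq_getElem (by rw [hlm]; omega), List.getElem?_eq_getElem h0,
        List.getElem_append_left (by rw [hli]; omega), List.getElem_take]

/-- Key determinism lemma: under `NoCommonVertexCycles`, two closed paths starting at the
same vertex have the same first edge. -/
lemma head_det (H : Q.NoCommonVertexCycles) :
    ∀ N (l l' : List Q.E), l.length + l'.length ≤ N →
      Q.IsClosedPath l → Q.IsClosedPath l' →
      l.head?.map Q.s = l'.head?.map Q.s → l.head? = l'.head? := by
  intro N
  induction N with
  | zero => intro l l' hN hl _ _; have := hl.pos; omega
  | succ n ih =>
    intro l l' hN hl hl' hs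
    by_cases hdl : (l.map Q.s).Nodup
    · by_cases hdl' : (l'.map Q.s).Nodup
      · have h0 := hl.pos; have h0' := hl'.pos
        rw [List.head?_eq_getElem?, List.head?_eq_getElem?,
          List.getElem?_eq_getElem h0, List.getElem?_eq_getElem h0'] at hs
        simp only [Option.map_some, Option.some.injEq] at hs
        rw [List.head?_eq_getElem?, List.head?_eq_getElem?,
          List.getElem?_eq_getElem h0, List.getElem?_eq_getElem h0']
        refine congrArg some ?_
        have hmem : Q.s (l[0]'h0) ∈ l.map Q.s := List.mem_map_of_mem (List.getElem_mem _)
        have hmem' : Q.s (l'[0]'h0') ∈ l'.map Q.s := List.mem_map_of_mem (List.getElem_mem _)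
        by_cases hrot : RotEquiv l l'
        · obtain ⟨m, hm⟩ := hrot
          subst hm
          rw [List.getElem_rotate] at hs ⊢
          rw [getElem_eq_of_eq (show (0 + m) % l.length = m % l.length from by
            rw [Nat.zero_add])] at hs ⊢
          have e2 : (l.map Q.s)[0]'(by rw [List.length_map]; exact h0)
              = (l.map Q.s)[m % l.length]'(by rw [List.length_map]; exact Nat.mod_lt _ h0) := by
            rw [List.getElem_map, List.getElem_map]; exact hs
          exact getElem_eq_of_eq ((hdl.getElem_inj_iff).mp e2)
        · exact absurd (show Q.s (l[0]'h0) ∈ l'.map Q.s from by rw [hs]; exact hmem')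
            (H l l' ⟨hl, hdl⟩ ⟨hl', hdl'⟩ hrot _ hmem)
      · obtain ⟨m, hm, hlen, hhead⟩ := shrink hl' hdl'
        have := ih l m (by omega) hl hm (by rw [hhead]; exact hs)
        exact this.trans hhead
    · obtain ⟨m, hm, hlen, hhead⟩ := shrink hl hdl
      have := ih m l' (by omega) hm hl' (by rw [hhead]; exact hs)
      exact (hhead.symm).trans this

/-! ### Kronecker square lemmas -/

lemma proj_fst {l : List (Q.kron Q).E} (h : (Q.kron Q).IsClosedPath l) :
    Q.IsClosedPath (l.map Prod.fst) := by
  rw [isClosedPath_iff_getElem] at h ⊢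
  obtain ⟨h0, hch, hcl⟩ := h
  refine ⟨by erw [List.length_map]; exact h0, ?_, ?_⟩
  · intro i hi
    erw [List.length_map] at hi
    erw [List.getElem_map, List.getElem_map]
    exact congrArg Prod.fst (hch i hi)
  · intro hp
    erw [List.getElem_map, List.getElem_map,
      getElem_eq_of_eq (show (l.map Prod.fst).length - 1 = l.length - 1 from by
        erw [List.length_map]; rfl)]
    exact congrArg Prod.fst (hcl h0)

lemma proj_snd {l : List (Q.kron Q).E} (h : (Q.kron Q).IsClosedPath l) :
    Q.IsClosedPath (l.map Prod.snd) := by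
  rw [isClosedPath_iff_getElem] at h ⊢
  obtain ⟨h0, hch, hcl⟩ := h
  refine ⟨by erw [List.length_map]; exact h0, ?_, ?_⟩
  · intro i hi
    erw [List.length_map] at hi
    erw [List.getElem_map, List.getElem_map]
    exact congrArg Prod.snd (hch i hi)
  · intro hp
    erw [List.getElem_map, List.getElem_map,
      getElem_eq_of_eq (show (l.map Prod.snd).length - 1 = l.length - 1 from by
        erw [List.length_map]; rfl)]
    exact congrArg Prod.snd (hcl h0)

lemma kron_head_det (H : Q.NoCommonVertexCycles)
    {l l' : List (Q.kron Q).E} (hl : (Q.kron Q).IsClosedPath l)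
    (hl' : (Q.kron Q).IsClosedPath l')
    (hs : l.head?.map (Q.kron Q).s = l'.head?.map (Q.kron Q).s) :
    l.head? = l'.head? := by
  have h0 := hl.pos; have h0' := hl'.pos
  rw [List.head?_eq_getElem?, List.head?_eq_getElem?,
    List.getElem?_eq_getElem h0, List.getElem?_eq_getElem h0'] at hs
  simp only [Option.map_some, Option.some.injEq] at hs
  have hf := head_det H ((l.map Prod.fst).length + (l'.map Prod.fst).length)
      (l.map Prod.fst) (l'.map Prod.fst) le_rfl (proj_fst hl) (proj_fst hl') (by
    erw [List.head?_eq_getElem?, List.head?_eq_getElem?,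
      List.getElem?_eq_getElem (by erw [List.length_map]; exact h0),
      List.getElem?_eq_getElem (by erw [List.length_map]; exact h0'),
      List.getElem_map, List.getElem_map]
    exact congrArg (fun v => some v.1) hs)
  have hg := head_det H ((l.map Prod.snd).length + (l'.map Prod.snd).length)
      (l.map Prod.snd) (l'.map Prod.snd) le_rfl (proj_snd hl) (proj_snd hl') (by
    erw [List.head?_eq_getElem?, List.head?_eq_getElem?,
      List.getElem?_eq_getElem (by erw [List.length_map]; exact h0),
      List.getElem?_eq_getElem (by erw [List.length_map]; exact h0'),
      List.getElem_map, List.getElem_map]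
    exact congrArg (fun v => some v.2) hs)
  erw [List.head?_eq_getElem?, List.head?_eq_getElem?,
    List.getElem?_eq_getElem (by erw [List.length_map]; exact h0),
    List.getElem?_eq_getElem (by erw [List.length_map]; exact h0'),
    List.getElem_map, List.getElem_map] at hf hg
  have hf' : (l[0]'h0).1 = (l'[0]'h0').1 := Option.some.inj hf
  have hg' : (l[0]'h0).2 = (l'[0]'h0').2 := Option.some.inj hg
  rw [List.head?_eq_getElem?, List.head?_eq_getElem?,
    List.getElem?_eq_getElem h0, List.getElem?_eq_getElem h0']
  exact congrArg some (Prod.ext hf' hg')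

lemma cycles_eq_of_head (H : Q.NoCommonVertexCycles) {d d' : List (Q.kron Q).E}
    (hd : (Q.kron Q).IsCycle d) (hd' : (Q.kron Q).IsCycle d')
    (hss : d.head?.map (Q.kron Q).s = d'.head?.map (Q.kron Q).s) : d = d' := by
  have h0 := hd.1.pos; have h0' := hd'.1.pos
  have hss0 : (Q.kron Q).s (d[0]'h0) = (Q.kron Q).s (d'[0]'h0') := by
    rw [List.head?_eq_getElem?, List.head?_eq_getElem?,
      List.getElem?_eq_getElem h0, List.getElem?_eq_getElem h0'] at hss
    simpa using hss
  have key : ∀ k (hk : k < d.length) (hk' : k < d'.length), d[k] = d'[k] := by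
    intro k
    induction k with
    | zero =>
      intro hk hk'
      have := kron_head_det H hd.1 hd'.1 hss
      rw [List.head?_eq_getElem?, List.head?_eq_getElem?,
        List.getElem?_eq_getElem h0, List.getElem?_eq_getElem h0'] at this
      exact Option.some.inj this
    | succ n ihn =>
      intro hk hk'
      have hn := ihn (by omega) (by omega)
      have hsrc : (Q.kron Q).s (d[n + 1]'hk) = (Q.kron Q).s (d'[n + 1]'hk') := by
        rw [← hd.1.chain_gE hk, ← hd'.1.chain_gE hk', hn]
      have hl1 : (d.rotate (n + 1)).head? = some (d[n + 1]'hk) := by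
        rw [List.head?_eq_getElem?,
          List.getElem?_eq_getElem (by rw [List.length_rotate]; omega),
          List.getElem_rotate]
        exact congrArg some (getElem_eq_of_eq (by rw [Nat.zero_add]; exact Nat.mod_eq_of_lt hk))
      have hl1' : (d'.rotate (n + 1)).head? = some (d'[n + 1]'hk') := by
        rw [List.head?_eq_getElem?,
          List.getElem?_eq_getElem (by rw [List.length_rotate]; omega),
          List.getElem_rotate]
        exact congrArg some (getElem_eq_of_eq (by rw [Nat.zero_add]; exact Nat.mod_eq_of_lt hk'))
      have hr := kron_head_det H (hd.1.rotate (n + 1)) (hd'.1.rotate (n + 1))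
        (by rw [hl1, hl1']; simp only [Option.map_some]; exact congrArg some hsrc)
      rw [hl1, hl1'] at hr
      exact Option.some.inj hr
  have not_lt : ∀ (a b : List (Q.kron Q).E), (Q.kron Q).IsCycle a → (Q.kron Q).IsCycle b →
      (∀ k (hk : k < a.length) (hk' : k < b.length), a[k] = b[k]) →
      (∀ (ha : 0 < a.length) (hb : 0 < b.length), (Q.kron Q).s a[0] = (Q.kron Q).s b[0]) →
      ¬ a.length < b.length := by
    intro a b ha hb hkey hs0 hlt
    have ha0 := ha.1.pos
    have hb0 : 0 < b.length := by omega
    have e1 : (Q.kron Q).s (b[a.length]'hlt) = (Q.kron Q).s (b[0]'hb0) := by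
      have c1 := hb.1.chain_gE (i := a.length - 1) (by omega)
      rw [getElem_eq_of_eq (show a.length - 1 + 1 = a.length from by omega)] at c1
      rw [← c1, ← hkey (a.length - 1) (by omega) (by omega)]
      have c2 := ha.1.closed_gE
      rw [c2]
      exact hs0 ha0 hb0
    have e2 : (b.map (Q.kron Q).s)[a.length]'(by rw [List.length_map]; exact hlt)
        = (b.map (Q.kron Q).s)[0]'(by rw [List.length_map]; exact hb0) := by
      rw [List.getElem_map, List.getElem_map]; exact e1
    have := (hb.2.getElem_inj_iff).mp e2
    omega
  have hlen : d.length = d'.length := by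
    have n1 := not_lt d d' hd hd' key (fun _ _ => hss0)
    have n2 := not_lt d' d hd' hd (fun k hk hk' => (key k hk' hk).symm) (fun _ _ => hss0.symm)
    omega
  exact List.ext_getElem hlen key

lemma diag_cycle {c : List Q.E} (hc : Q.IsCycle c) :
    (Q.kron Q).IsCycle (c.map (fun e => (e, e))) := by
  obtain ⟨hcp, hnd⟩ := hc
  constructor
  · rw [isClosedPath_iff_getElem] at hcp ⊢
    obtain ⟨h0, hch, hcl⟩ := hcp
    refine ⟨by erw [List.length_map]; exact h0, ?_, ?_⟩
    · intro i hi
      erw [List.length_map] at hi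
      erw [List.getElem_map, List.getElem_map]
      have := hch i hi
      exact Prod.ext this this
    · intro hp
      erw [List.getElem_map, List.getElem_map,
        getElem_eq_of_eq (show (c.map fun e => (e, e)).length - 1 = c.length - 1 from by
          erw [List.length_map])]
      have := hcl h0
      exact Prod.ext this this
  · erw [List.map_map]
    have he : ((Q.kron Q).s ∘ fun e => ((e, e) : (Q.kron Q).E))
        = (fun v => ((v, v) : (Q.kron Q).V)) ∘ Q.s := rfl
    erw [he, ← List.map_map]
    exact List.Nodup.map (fun a b h => congrArg Prod.fst h) hnd

lemma rotEquiv_iff_isRotated {c c' : List Q.E} : RotEquiv c c' ↔ List.IsRotated c c' :=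
  ⟨fun ⟨n, h⟩ => ⟨n, h.symm⟩, fun ⟨n, h⟩ => ⟨n, h.symm⟩⟩

end Quiv


/-- In `Q` any two distinct cycles have no common vertex iff the same holds in the
Kronecker square. -/
theorem kron_noCommonVertexCycles_iff (Q : Quiv) :
    Q.NoCommonVertexCycles ↔ (Q.kron Q).NoCommonVertexCycles := by
  constructor
  · intro H c c' hc hc' hne v hv hv'
    apply hne
    rw [Quiv.rotEquiv_iff_isRotated]
    obtain ⟨i, hi, hvi⟩ := List.mem_iff_getElem.mp hv
    obtain ⟨j, hj, hvj⟩ := List.mem_iff_getElem.mp hv'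
    rw [List.length_map] at hi hj
    rw [List.getElem_map] at hvi hvj
    have hrot : c.rotate i = c'.rotate j := by
      apply Quiv.cycles_eq_of_head H (hc.rotate i) (hc'.rotate j)
      rw [List.head?_eq_getElem?, List.head?_eq_getElem?,
        List.getElem?_eq_getElem (by rw [List.length_rotate]; omega),
        List.getElem?_eq_getElem (by rw [List.length_rotate]; omega),
        List.getElem_rotate, List.getElem_rotate]
      simp only [Option.map_some]
      rw [getElem_eq_of_eq (show (0 + i) % c.length = i from by
          rw [Nat.zero_add]; exact Nat.mod_eq_of_lt hi),
        getElem_eq_of_eq (show (0 + j) % c'.length = j from by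
          rw [Nat.zero_add]; exact Nat.mod_eq_of_lt hj)]
      rw [hvi, hvj]
    have r1 : List.IsRotated c (c.rotate i) := ⟨i, rfl⟩
    have r2 : List.IsRotated c' (c'.rotate j) := ⟨j, rfl⟩
    have r2' : List.IsRotated (c.rotate i) c' := by rw [hrot]; exact r2.symm
    exact r1.trans r2'
  · intro H c c' hc hc' hne v hv hv'
    have hinj : Function.Injective (fun e : Q.E => ((e, e) : (Q.kron Q).E)) :=
      fun a b h => congrArg Prod.fst h
    obtain ⟨e, he, hse⟩ := List.mem_map.mp hv
    obtain ⟨e', he', hse'⟩ := List.mem_map.mp hv'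
    refine H (c.map fun e => (e, e)) (c'.map fun e => (e, e))
      (Quiv.diag_cycle hc) (Quiv.diag_cycle hc') ?_ (v, v) ?_ ?_
    · rintro ⟨n, hn⟩
      apply hne
      refine ⟨n, ?_⟩
      erw [← List.map_rotate] at hn
      exact List.map_injective_iff.mpr hinj hn
    · erw [List.map_map]
      exact List.mem_map.mpr ⟨e, he, by show (Q.s e, Q.s e) = (v, v); rw [hse]⟩
    · erw [List.map_map]
      exact List.mem_map.mpr ⟨e', he', by show (Q.s e', Q.s e') = (v, v); rw [hse']⟩
end

section
/- A quiver Q satisfies Condition (K) if and only if its Kronecker square Q̂ satisfies Condition (K). -/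
namespace Quiv

/-- A simple closed path based at `v`: a nonempty closed path starting and ending at `v`
that does not visit `v` in between. -/
def SimpleClosedAt (Q : Quiv) (v : Q.V) (l : List Q.E) : Prop :=
  l ≠ [] ∧ l.Chain' (fun e f => Q.r e = Q.s f) ∧
    l.head?.map Q.s = some v ∧ l.getLast?.map Q.r = some v ∧
    v ∉ l.tail.map Q.s

/-- Condition (K): every vertex on a simple closed path is the base of at least two
different simple closed paths. -/
def ConditionK (Q : Quiv) : Prop :=
  ∀ (v : Q.V) (l : List Q.E), Q.SimpleClosedAt v l →
    ∃ l' : List Q.E, l' ≠ l ∧ Q.SimpleClosedAt v l'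

end Quiv


namespace Quiv

theorem mem_tail_map_iff {α β : Type*} (f : α → β) (l : List α) (b : β) :
    b ∈ l.tail.map f ↔ ∃ i, ∃ _ : 0 < i, ∃ h : i < l.length, f l[i] = b := by
  simp only [List.mem_iff_getElem, List.getElem_map, List.length_map, List.getElem_tail,
    List.length_tail]
  constructor
  · rintro ⟨n, hn, rfl⟩
    exact ⟨n + 1, by omega, by omega, rfl⟩
  · rintro ⟨i, h0, h, rfl⟩
    refine ⟨i - 1, by omega, ?_⟩
    simp only [Nat.sub_add_cancel h0]

theorem simpleClosedAt_iff_idx (Q : Quiv) (v : Q.V) (l : List Q.E) :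
    Q.SimpleClosedAt v l ↔ ∃ h : 0 < l.length,
      (∀ i (hi : i + 1 < l.length), Q.r l[i] = Q.s l[i+1]) ∧
      Q.s (l[0]'h) = v ∧ Q.r (l[l.length - 1]'(by omega)) = v ∧
      (∀ i, 0 < i → ∀ hi : i < l.length, Q.s l[i] ≠ v) := by
  unfold SimpleClosedAt
  constructor
  · rintro ⟨hne, hch, hh, hl, hm⟩
    have hlen : 0 < l.length := List.length_pos_iff.mpr hne
    refine ⟨hlen, ?_, ?_, ?_, ?_⟩
    · intro i hi
      have := List.isChain_iff_getElem.mp hch i (by omega)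
      simpa using this
    · rw [List.head?_eq_head hne, List.head_eq_getElem] at hh
      simpa using hh
    · rw [List.getLast?_eq_getLast hne, List.getLast_eq_getElem] at hl
      simpa using hl
    · intro i hi0 hi hsv
      exact hm ((mem_tail_map_iff _ _ _).mpr ⟨i, hi0, hi, hsv⟩)
  · rintro ⟨hlen, hch, hh, hl, hm⟩
    have hne : l ≠ [] := List.length_pos_iff.mp hlen
    refine ⟨hne, ?_, ?_, ?_, ?_⟩
    · refine List.isChain_iff_getElem.mpr ?_
      intro i hi
      simpa using hch i (by omega)
    · rw [List.head?_eq_head hne, List.head_eq_getElem]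
      simpa using hh
    · rw [List.getLast?_eq_getLast hne, List.getLast_eq_getElem]
      simpa using hl
    · intro hmem
      obtain ⟨i, h0, h, hsv⟩ := (mem_tail_map_iff _ _ _).mp hmem
      exact hm i h0 h hsv

def rep {α : Type*} (l : List α) : ℕ → List α
  | 0 => []
  | k + 1 => l ++ rep l k

theorem rep_succ {α : Type*} (l : List α) (k : ℕ) : rep l (k + 1) = l ++ rep l k := rfl

theorem rep_length {α : Type*} (l : List α) (k : ℕ) : (rep l k).length = k * l.length := by
  induction k with
  | zero => simp [rep]
  | succ k ih => simp [rep_succ, ih, Nat.succ_mul]; ring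

theorem rep_one {α : Type*} (l : List α) : rep l 1 = l := by simp [rep]

theorem rep_getElem {α : Type*} (l : List α) (k j : ℕ) (hl : 0 < l.length)
    (h : j < (rep l k).length) :
    (rep l k)[j] = l[j % l.length]'(Nat.mod_lt _ hl) := by
  induction k generalizing j with
  | zero => rw [rep_length] at h; omega
  | succ k ih =>
    by_cases hj : j < l.length
    · simp only [rep_succ]
      rw [List.getElem_append_left hj]
      congr 1
      exact (Nat.mod_eq_of_lt hj).symm
    · push_neg at hj
      have h' : j - l.length < (rep l k).length := by
        rw [rep_length] at h ⊢
        rw [Nat.succ_mul] at h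
        omega
      simp only [rep_succ]
      rw [List.getElem_append_right hj, ih _ h']
      congr 1
      conv_rhs => rw [show j = l.length + (j - l.length) from by omega]
      rw [Nat.add_mod_left]

theorem mod_succ_eq (m : ℕ) (hm : 0 < m) (i : ℕ) :
    (i + 1) % m = if i % m + 1 = m then 0 else i % m + 1 := by
  rcases Nat.lt_or_ge (i % m + 1) m with h | h
  · rw [if_neg (by omega)]
    conv_lhs => rw [← Nat.div_add_mod i m, add_assoc, Nat.mul_add_mod]
    exact Nat.mod_eq_of_lt h
  · have hr : i % m < m := Nat.mod_lt _ hm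
    rw [if_pos (by omega)]
    conv_lhs => rw [← Nat.div_add_mod i m, add_assoc, Nat.mul_add_mod]
    rw [show i % m + 1 = m from by omega, Nat.mod_self]

section RepPath

variable {Q : Quiv} {v : Q.V} {a : List Q.E} (ha : Q.SimpleClosedAt v a)

theorem length_pos_of_simple (ha : Q.SimpleClosedAt v a) : 0 < a.length :=
  ((Q.simpleClosedAt_iff_idx v a).mp ha).fst

theorem rep_s_eq_iff (ha : Q.SimpleClosedAt v a) (k j : ℕ) (h : j < (rep a k).length) :
    Q.s ((rep a k)[j]) = v ↔ a.length ∣ j := by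
  obtain ⟨hm, hch, hh, hlast, hmid⟩ := (Q.simpleClosedAt_iff_idx v a).mp ha
  rw [rep_getElem a k j hm h, Nat.dvd_iff_mod_eq_zero]
  by_cases h0 : j % a.length = 0
  · simp only [h0]
    simp [hh]
  · have hne := hmid (j % a.length) (by omega) (Nat.mod_lt _ hm)
    simp [hne, h0]

theorem rep_chain (ha : Q.SimpleClosedAt v a) (k i : ℕ) (h : i + 1 < (rep a k).length) :
    Q.r ((rep a k)[i]'(by omega)) = Q.s ((rep a k)[i+1]) := by
  obtain ⟨hm, hch, hh, hlast, hmid⟩ := (Q.simpleClosedAt_iff_idx v a).mp ha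
  rw [rep_getElem a k i hm (by omega), rep_getElem a k (i+1) hm h]
  have hr : i % a.length < a.length := Nat.mod_lt _ hm
  by_cases hc : i % a.length + 1 = a.length
  · have e : (i + 1) % a.length = 0 := by rw [mod_succ_eq _ hm, if_pos hc]
    have e2 : i % a.length = a.length - 1 := by omega
    simp only [e, e2]
    rw [hlast, hh]
  · have e : (i + 1) % a.length = i % a.length + 1 := by rw [mod_succ_eq _ hm, if_neg hc]
    simp only [e]
    exact hch (i % a.length) (by omega)

theorem rep_head (ha : Q.SimpleClosedAt v a) (k : ℕ) (h : 0 < (rep a k).length) :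
    Q.s ((rep a k)[0]) = v := by
  rw [rep_s_eq_iff ha k 0 h]
  exact Dvd.intro 0 rfl

theorem rep_last (ha : Q.SimpleClosedAt v a) (k : ℕ) (hk : 0 < k)
    (h : (rep a k).length - 1 < (rep a k).length) :
    Q.r ((rep a k)[(rep a k).length - 1]) = v := by
  obtain ⟨hm, hch, hh, hlast, hmid⟩ := (Q.simpleClosedAt_iff_idx v a).mp ha
  rw [rep_getElem a k _ hm h]
  have e1 : (rep a k).length = k * a.length := rep_length a k
  have e2 : k * a.length - 1 = a.length * (k - 1) + (a.length - 1) := by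
    obtain ⟨k', rfl⟩ := Nat.exists_eq_add_of_le hk
    have h1 : Nat.succ 0 + k' - 1 = k' := by omega
    have h2 : (Nat.succ 0 + k') * a.length = a.length + k' * a.length := by ring
    rw [h1, h2, mul_comm a.length k']
    omega
  have e3 : (k * a.length - 1) % a.length = a.length - 1 := by
    rw [e2, Nat.mul_add_mod, Nat.mod_eq_of_lt (by omega)]
  simp only [e1, e3]
  exact hlast

end RepPath

end Quiv

namespace Quiv

theorem kron_s (Q : Quiv) (e : (Q.kron Q).E) : (Q.kron Q).s e = (Q.s e.1, Q.s e.2) := rfl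

theorem kron_r (Q : Quiv) (e : (Q.kron Q).E) : (Q.kron Q).r e = (Q.r e.1, Q.r e.2) := rfl

theorem kpath_simple {Q : Quiv} {v w : Q.V} {a b : List Q.E}
    (ha : Q.SimpleClosedAt v a) (hb : Q.SimpleClosedAt w b) :
    (Q.kron Q).SimpleClosedAt (v, w)
      ((rep a (Nat.lcm a.length b.length / a.length)).zip
        (rep b (Nat.lcm a.length b.length / b.length))) := by
  have hma := length_pos_of_simple ha
  have hmb := length_pos_of_simple hb
  set L := Nat.lcm a.length b.length with hLdef
  set ka := L / a.length with hkadef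
  set kb := L / b.length with hkbdef
  have hL0 : 0 < L := Nat.lcm_pos hma hmb
  have hA : (rep a ka).length = L := by
    rw [rep_length, hkadef, Nat.div_mul_cancel (Nat.dvd_lcm_left _ _)]
  have hB : (rep b kb).length = L := by
    rw [rep_length, hkbdef, Nat.div_mul_cancel (Nat.dvd_lcm_right _ _)]
  have hka : 0 < ka := by
    rcases Nat.eq_zero_or_pos ka with h | h
    · rw [h, rep_length] at hA; omega
    · exact h
  have hkb : 0 < kb := by
    rcases Nat.eq_zero_or_pos kb with h | h
    · rw [h, rep_length] at hB; omega
    · exact h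
  have hlen : ((rep a ka).zip (rep b kb)).length = L := by
    rw [List.length_zip, hA, hB, min_self]
  refine (simpleClosedAt_iff_idx _ _ _).mpr ?_
  simp only [kron]
  refine ⟨by omega, ?_, ?_, ?_, ?_⟩
  · intro i hi
    rw [hlen] at hi
    simp only [List.getElem_zip]
    rw [Prod.mk.injEq]
    erw [List.getElem_zip]
    exact ⟨rep_chain ha ka i (by omega), rep_chain hb kb i (by omega)⟩
  · simp only [List.getElem_zip]
    rw [Prod.mk.injEq]
    exact ⟨rep_head ha ka (by omega), rep_head hb kb (by omega)⟩
  · simp only [List.getElem_zip]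
    rw [Prod.mk.injEq]
    constructor
    · have e : ((rep a ka).zip (rep b kb)).length - 1 = (rep a ka).length - 1 := by omega
      simp only [e]
      exact rep_last ha ka hka (by omega)
    · have e : ((rep a ka).zip (rep b kb)).length - 1 = (rep b kb).length - 1 := by omega
      simp only [e]
      exact rep_last hb kb hkb (by omega)
  · intro i h0 hi hEq
    simp only [List.getElem_zip] at hEq
    rw [Prod.mk.injEq] at hEq
    rw [hlen] at hi
    have hda : a.length ∣ i := (rep_s_eq_iff ha ka i (by omega)).mp hEq.1
    have hdb : b.length ∣ i := (rep_s_eq_iff hb kb i (by omega)).mp hEq.2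
    have : L ∣ i := Nat.lcm_dvd hda hdb
    have := Nat.le_of_dvd h0 this
    omega

theorem take_rep {α : Type*} (l : List α) {k : ℕ} (hk : 0 < k) :
    (rep l k).take l.length = l := by
  obtain ⟨k', rfl⟩ := Nat.exists_eq_add_of_le hk
  rw [show Nat.succ 0 + k' = k' + 1 from by omega, rep_succ, List.take_left]

theorem rep_eq_rep_aux {Q : Quiv} {v : Q.V} {a a' : List Q.E} {k k' : ℕ}
    (ha : Q.SimpleClosedAt v a) (ha' : Q.SimpleClosedAt v a')
    (hk' : 0 < k') (h : rep a k = rep a' k') (hlt : a.length < a'.length) : False := by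
  have hma := length_pos_of_simple ha
  have hma' := length_pos_of_simple ha'
  have hlen : k * a.length = k' * a'.length := by
    have := congrArg List.length h
    rwa [rep_length, rep_length] at this
  have hk2 : a.length < k * a.length := by
    calc a.length < a'.length := hlt
      _ ≤ k' * a'.length := Nat.le_mul_of_pos_left _ hk'
      _ = k * a.length := hlen.symm
  have hja : a.length < (rep a k).length := by rw [rep_length]; exact hk2
  have h1 : Q.s ((rep a k)[a.length]) = v :=
    (rep_s_eq_iff ha k a.length hja).mpr dvd_rfl
  have hja' : a.length < (rep a' k').length := by rw [← h]; exact hja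
  have h2 : ¬ a'.length ∣ a.length := by
    intro hd
    exact absurd (Nat.le_of_dvd (by omega) hd) (by omega)
  have h3 := (rep_s_eq_iff ha' k' a.length hja').not.mpr h2
  simp only [← h] at h3
  exact h3 h1

theorem rep_eq_rep {Q : Quiv} {v : Q.V} {a a' : List Q.E} {k k' : ℕ}
    (ha : Q.SimpleClosedAt v a) (ha' : Q.SimpleClosedAt v a')
    (hk : 0 < k) (hk' : 0 < k') (h : rep a k = rep a' k') : a = a' := by
  rcases lt_trichotomy a.length a'.length with hlt | heq | hgt
  · exact absurd (rep_eq_rep_aux ha ha' hk' h hlt) (not_false)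
  · rw [← take_rep a hk, ← take_rep a' hk', h, heq]
  · exact absurd (rep_eq_rep_aux ha' ha hk h.symm hgt) (not_false)

end Quiv

namespace Quiv

theorem extract_simple (Q : Quiv) {v : Q.V} {p : List Q.E}
    (hlen : 0 < p.length)
    (hch : ∀ i (hi : i + 1 < p.length), Q.r p[i] = Q.s p[i+1])
    (hh : Q.s (p[0]'hlen) = v)
    (hl : Q.r (p[p.length - 1]'(by omega)) = v) :
    ∃ m, ∃ _ : 0 < m, ∃ _ : m ≤ p.length, Q.SimpleClosedAt v (p.take m) ∧
      ∀ h : m < p.length, Q.s (p[m]'h) = v := by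
  classical
  have hex' : ∃ i, i + 1 = p.length ∨ ∃ h : i + 1 < p.length, Q.s (p[i+1]'h) = v :=
    ⟨p.length - 1, Or.inl (by omega)⟩
  obtain ⟨n, hPn, hnmin⟩ : ∃ n, (n + 1 = p.length ∨ ∃ h : n + 1 < p.length, Q.s (p[n+1]'h) = v) ∧
      ∀ k, k < n → ¬(k + 1 = p.length ∨ ∃ h : k + 1 < p.length, Q.s (p[k+1]'h) = v) :=
    ⟨Nat.find hex', Nat.find_spec hex', fun k hk => Nat.find_min hex' hk⟩
  have hnle : n + 1 ≤ p.length := by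
    by_contra h
    exact hnmin (p.length - 1) (by omega) (Or.inl (by omega))
  have htl : (p.take (n + 1)).length = n + 1 := by rw [List.length_take]; omega
  have hmid : ∀ i, 0 < i → i < n + 1 → ∀ h : i < p.length, Q.s (p[i]'h) ≠ v := by
    intro i h0 hin h hsv
    apply hnmin (i - 1) (by omega)
    right
    refine ⟨by omega, ?_⟩
    have e : i - 1 + 1 = i := by omega
    simp only [e]
    exact hsv
  refine ⟨n + 1, by omega, hnle, ?_, ?_⟩
  · rw [simpleClosedAt_iff_idx]
    refine ⟨by omega, ?_, ?_, ?_, ?_⟩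
    · intro i hi
      rw [htl] at hi
      simp only [List.getElem_take]
      exact hch i (by omega)
    · simp only [List.getElem_take]
      exact hh
    · have e : (p.take (n + 1)).length - 1 = n := by omega
      simp only [e, List.getElem_take]
      rcases hPn with hend | ⟨hlt, hsv⟩
      · have e2 : n = p.length - 1 := by omega
        simp only [e2]
        exact hl
      · rw [hch n hlt]
        exact hsv
    · intro i h0 hi
      rw [htl] at hi
      simp only [List.getElem_take]
      exact hmid i h0 hi (by omega)
  · intro h
    rcases hPn with hend | ⟨hlt, hsv⟩
    · omega
    · exact hsv

end Quiv

namespace Quiv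

theorem extract_fst {Q : Quiv} {v w : Q.V} {l : List (Q.kron Q).E}
    (h : (Q.kron Q).SimpleClosedAt (v, w) l) :
    ∃ m, ∃ _ : 0 < m, ∃ _ : m ≤ l.length,
      Q.SimpleClosedAt v ((l.map Prod.fst).take m) ∧
      ∀ hm : m < l.length, Q.s ((l[m]'hm).1) = v := by
  change List (Q.E × Q.E) at l
  have hlkl : List.length (α := (Q.kron Q).E) l = List.length (α := Q.E × Q.E) l := rfl
  obtain ⟨hlen, hch, hh, hlast, hmid⟩ := (simpleClosedAt_iff_idx _ _ _).mp h
  have hplen : (l.map Prod.fst).length = l.length := List.length_map _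
  obtain ⟨m, hm0, hmle, hsimp, hret⟩ := Q.extract_simple (p := l.map Prod.fst)
    (by rw [hplen]; exact hlen)
    (fun i hi => by
      simp only [List.getElem_map]
      exact congrArg Prod.fst (hch i (by rw [hplen] at hi; exact hi)))
    (by simp only [List.getElem_map]; exact congrArg Prod.fst hh)
    (by simp only [List.getElem_map, hplen]; exact congrArg Prod.fst hlast)
  refine ⟨m, hm0, by omega, hsimp, fun hm => ?_⟩
  have := hret (by omega)
  simp only [List.getElem_map] at this
  exact this

theorem extract_snd {Q : Quiv} {v w : Q.V} {l : List (Q.kron Q).E}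
    (h : (Q.kron Q).SimpleClosedAt (v, w) l) :
    ∃ m, ∃ _ : 0 < m, ∃ _ : m ≤ l.length,
      Q.SimpleClosedAt w ((l.map Prod.snd).take m) ∧
      ∀ hm : m < l.length, Q.s ((l[m]'hm).2) = w := by
  change List (Q.E × Q.E) at l
  have hlkl : List.length (α := (Q.kron Q).E) l = List.length (α := Q.E × Q.E) l := rfl
  obtain ⟨hlen, hch, hh, hlast, hmid⟩ := (simpleClosedAt_iff_idx _ _ _).mp h
  have hplen : (l.map Prod.snd).length = l.length := List.length_map _
  obtain ⟨m, hm0, hmle, hsimp, hret⟩ := Q.extract_simple (p := l.map Prod.snd)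
    (by rw [hplen]; exact hlen)
    (fun i hi => by
      simp only [List.getElem_map]
      exact congrArg Prod.snd (hch i (by rw [hplen] at hi; exact hi)))
    (by simp only [List.getElem_map]; exact congrArg Prod.snd hh)
    (by simp only [List.getElem_map, hplen]; exact congrArg Prod.snd hlast)
  refine ⟨m, hm0, by omega, hsimp, fun hm => ?_⟩
  have := hret (by omega)
  simp only [List.getElem_map] at this
  exact this

theorem kdiv_pos {m n : ℕ} (hm : 0 < m) (hn : 0 < n) : 0 < Nat.lcm m n / m :=
  Nat.div_pos (Nat.le_of_dvd (Nat.lcm_pos hm hn) (Nat.dvd_lcm_left m n)) hm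

theorem rep_lcm_len_left {α : Type*} (a b : List α) :
    (rep a (Nat.lcm a.length b.length / a.length)).length = Nat.lcm a.length b.length := by
  rw [rep_length, Nat.div_mul_cancel (Nat.dvd_lcm_left _ _)]

theorem rep_lcm_len_right {α : Type*} (a b : List α) :
    (rep b (Nat.lcm a.length b.length / b.length)).length = Nat.lcm a.length b.length := by
  rw [rep_length, Nat.div_mul_cancel (Nat.dvd_lcm_right _ _)]

end Quiv

/-- A quiver satisfies Condition (K) iff its Kronecker square satisfies Condition (K). -/
theorem kron_conditionK_iff (Q : Quiv) :
    Q.ConditionK ↔ (Q.kron Q).ConditionK := by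
  constructor
  · intro hK vw l hl
    obtain ⟨v, w⟩ := vw
    change List (Q.E × Q.E) at l
    have hlkl : List.length (α := (Q.kron Q).E) l = List.length (α := Q.E × Q.E) l := rfl
    obtain ⟨m1, hm10, hm1le, hc1, -⟩ := Quiv.extract_fst hl
    obtain ⟨m2, hm20, hm2le, hc2, -⟩ := Quiv.extract_snd hl
    set c1 := (l.map Prod.fst).take m1 with hc1def
    set c2 := (l.map Prod.snd).take m2 with hc2def
    obtain ⟨a, hane, hasimp⟩ := hK v c1 hc1
    have hX := Quiv.kpath_simple hasimp hc2
    have hY := Quiv.kpath_simple hc1 hc2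
    by_cases hcase :
        (Quiv.rep c1 (Nat.lcm c1.length c2.length / c1.length)).zip
          (Quiv.rep c2 (Nat.lcm c1.length c2.length / c2.length)) = l
    · refine ⟨_, ?_, hX⟩
      intro hEq
      have hEq' :
          (Quiv.rep a (Nat.lcm a.length c2.length / a.length)).zip
            (Quiv.rep c2 (Nat.lcm a.length c2.length / c2.length)) =
          (Quiv.rep c1 (Nat.lcm c1.length c2.length / c1.length)).zip
            (Quiv.rep c2 (Nat.lcm c1.length c2.length / c2.length)) := by
        rw [hEq, hcase]
      have hfst : Quiv.rep a (Nat.lcm a.length c2.length / a.length) =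
          Quiv.rep c1 (Nat.lcm c1.length c2.length / c1.length) := by
        have := congrArg (List.map Prod.fst) hEq'
        rwa [List.map_fst_zip (by rw [Quiv.rep_lcm_len_left, Quiv.rep_lcm_len_right]),
          List.map_fst_zip (by rw [Quiv.rep_lcm_len_left, Quiv.rep_lcm_len_right])] at this
      have hma := Quiv.length_pos_of_simple hasimp
      have hmc1 := Quiv.length_pos_of_simple hc1
      have hmc2 := Quiv.length_pos_of_simple hc2
      exact hane
        (Quiv.rep_eq_rep hasimp hc1 (Quiv.kdiv_pos hma hmc2) (Quiv.kdiv_pos hmc1 hmc2) hfst)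
    · exact ⟨_, hcase, hY⟩
  · intro hK v l hl
    have hm := Quiv.length_pos_of_simple hl
    have hdiag : (Q.kron Q).SimpleClosedAt (v, v) (l.zip l) := by
      have h := Quiv.kpath_simple hl hl
      rw [Nat.lcm_self, Nat.div_self hm, Quiv.rep_one] at h
      exact h
    obtain ⟨l', hlne, hl'⟩ := hK (v, v) (l.zip l) hdiag
    change List (Q.E × Q.E) at l'
    have hl'kl : List.length (α := (Q.kron Q).E) l' = List.length (α := Q.E × Q.E) l' := rfl
    obtain ⟨m1, hm10, hm1le, hc1, hret1⟩ := Quiv.extract_fst hl'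
    obtain ⟨m2, hm20, hm2le, hc2, hret2⟩ := Quiv.extract_snd hl'
    by_cases h1 : (l'.map Prod.fst).take m1 = l
    · by_cases h2 : (l'.map Prod.snd).take m2 = l
      · exfalso
        have hlen1 : m1 = l.length := by
          have := congrArg List.length h1
          rw [List.length_take, List.length_map] at this
          omega
        have hlen2 : m2 = l.length := by
          have := congrArg List.length h2
          rw [List.length_take, List.length_map] at this
          omega
        rcases Nat.lt_or_ge m1 l'.length with hlt | hge
        · obtain ⟨hL, hch', hh', hlast', hmid'⟩ := (Quiv.simpleClosedAt_iff_idx _ _ _).mp hl'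
          apply hmid' m1 hm10 hlt
          have e1 := hret1 hlt
          have e2 := hret2 (by omega)
          have em : m2 = m1 := by omega
          simp only [em] at e2
          rw [Quiv.kron_s]
          exact Prod.ext e1 e2
        · have hp1 : l'.map Prod.fst = l := by
            rw [← h1]
            exact (List.take_of_length_le (by rw [List.length_map]; omega)).symm
          have hp2 : l'.map Prod.snd = l := by
            rw [← h2]
            exact (List.take_of_length_le (by rw [List.length_map]; omega)).symm
          apply hlne
          have hz := List.zip_unzip l'
          rw [List.unzip_eq_map] at hz
          simp only at hz
          rw [hp1, hp2] at hz
          exact hz.symm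
      · exact ⟨_, h2, hc2⟩
    · exact ⟨_, h1, hc1⟩
end
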